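/- Let X be a separable metric space and Y a metric space. If f : X → Y has the LTZ-property, then f has the Lebesgue property. -/

import Mathlib

/-- On a separable metric space, the LTZ-property implies the Lebesgue property. -/
theorem stmt_4 {X Y : Type*} [MetricSpace X] [TopologicalSpace.SeparableSpace X]
    [MetricSpace Y] (f : X → Y)
    (h : ∀ ε : ℝ, 0 < ε → ∃ δ : X → ℝ, (∀ x, 0 < δ x) ∧
      ∀ x y : X, dist x y < min (δ x) (δ y) → dist (f x) (f y) < ε) :
    ∀ ε : ℝ, 0 < ε → ∃ C : ℕ → Set X, (∀ i, IsClosed (C i)) ∧ (⋃ i, C i) = Set.univ ∧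
      ∀ i, ∀ x ∈ C i, ∀ y ∈ C i, dist (f x) (f y) ≤ ε := by
  intro ε hε
  rcases isEmpty_or_nonempty X with hX | hX
  · refine ⟨fun _ => ∅, fun _ => isClosed_empty, ?_, by simp⟩
    have : (Set.univ : Set X) = ∅ := Set.univ_eq_empty_iff.2 hX
    simp [this]
  obtain ⟨δ, hδpos, hδ⟩ := h (ε / 3) (by linarith)
  obtain ⟨u, hu⟩ := TopologicalSpace.exists_dense_seq X
  set e : ℕ ≃ ℕ × ℕ := (Denumerable.eqv (ℕ × ℕ)).symm with he
  -- S (k, n) : points with δ ≥ 1/(k+1) inside a small ball around u n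
  set S : ℕ × ℕ → Set X := fun p =>
    {z | 1 / (p.1 + 1 : ℝ) ≤ δ z} ∩ Metric.ball (u p.2) (1 / (4 * (p.1 + 1))) with hS
  have hkpos : ∀ k : ℕ, (0 : ℝ) < 1 / (k + 1) := by
    intro k; positivity
  -- key: any two points in the closure of S (k, n) have close images
  have key : ∀ k n : ℕ, ∀ x ∈ closure (S (k, n)), ∀ y ∈ closure (S (k, n)),
      dist (f x) (f y) ≤ ε := by
    intro k n x hx y hy
    have hxy : ∀ z ∈ closure (S (k, n)), ∃ w ∈ S (k, n), dist (f z) (f w) < ε / 3 := by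
      intro z hz
      obtain ⟨w, hwS, hw⟩ := Metric.mem_closure_iff.1 hz (min (δ z) (1 / (k + 1)))
        (lt_min (hδpos z) (hkpos k))
      refine ⟨w, hwS, hδ z w ?_⟩
      have h1 : dist z w < δ z := lt_of_lt_of_le hw (min_le_left _ _)
      have h2 : dist z w < 1 / (k + 1 : ℝ) := lt_of_lt_of_le hw (min_le_right _ _)
      have h3 : (1 : ℝ) / (k + 1) ≤ δ w := hwS.1
      exact lt_min h1 (lt_of_lt_of_le h2 h3)
    obtain ⟨w, hwS, hw⟩ := hxy x hx
    obtain ⟨w', hw'S, hw'⟩ := hxy y hy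
    have hww' : dist (f w) (f w') < ε / 3 := by
      refine hδ w w' (lt_min ?_ ?_) <;>
      · refine lt_of_lt_of_le ?_ (by first | exact hwS.1 | exact hw'S.1)
        have hb := Metric.mem_ball.1 hwS.2
        have hb' := Metric.mem_ball.1 hw'S.2
        have : dist w w' ≤ dist w (u n) + dist w' (u n) := dist_triangle_right _ _ _
        have h4 : (0 : ℝ) < 4 * (k + 1) := by positivity
        calc dist w w' ≤ dist w (u n) + dist w' (u n) := this
          _ < 1 / (4 * (k + 1)) + 1 / (4 * (k + 1)) := by linarith
          _ < 1 / (k + 1) := by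
              rw [← add_div]
              rw [div_lt_div_iff₀ h4 (by positivity)]
              ring_nf
              nlinarith [hkpos k]
    have final : dist (f x) (f y) < ε :=
      calc dist (f x) (f y) ≤ dist (f x) (f w) + dist (f w) (f w') + dist (f w') (f y) :=
            dist_triangle4 _ _ _ _
        _ < ε / 3 + ε / 3 + ε / 3 := by
            have := dist_comm (f w') (f y) ▸ hw'
            linarith [hw, hww', this]
        _ = ε := by ring
    exact final.le
  refine ⟨fun i => closure (S (e i)), fun i => isClosed_closure, ?_, ?_⟩
  · ext x
    simp only [Set.mem_iUnion, Set.mem_univ, iff_true]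
    obtain ⟨k, hk⟩ : ∃ k : ℕ, 1 / (k + 1 : ℝ) ≤ δ x := by
      obtain ⟨k, hk⟩ := exists_nat_one_div_lt (hδpos x)
      exact ⟨k, hk.le⟩
    obtain ⟨n, hn⟩ := hu.exists_dist_lt x (by positivity : (0:ℝ) < 1 / (4 * (k + 1)))
    refine ⟨e.symm (k, n), ?_⟩
    have : x ∈ S (k, n) := ⟨hk, Metric.mem_ball.2 hn⟩
    simpa [Equiv.apply_symm_apply] using subset_closure this
  · intro i x hx y hy
    exact key (e i).1 (e i).2 x hx y hy
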